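/- Let λ = [a_1, ..., a_y] be a partition of n with all parts a_i ≥ 2 and a_1 ≥ 3, and let μ be the partition of n − 1 obtained by decreasing the last (smallest) part a_y by 1. Then D_n(λ) − D_{n−1}(μ) ≥ a_y + y − 2. -/

import Mathlib

/-- The `i`-th part of the conjugate partition: number of parts ≥ i. -/
def conjPart (a : List ℕ) (i : ℕ) : ℕ := (a.filter (fun x => i ≤ x)).length

/-- `a` is a partition of `n`: weakly decreasing, positive parts, summing to `n`. -/
def IsPartitionOf (n : ℕ) (a : List ℕ) : Prop :=
  List.Pairwise (· ≥ ·) a ∧ (∀ x ∈ a, 1 ≤ x) ∧ a.sum = n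

/-- Half-dimension of the nilpotent GL_n orbit attached to the partition `a` of `n`:
`(n² − Σ_i (a'_i)²)/2`. -/
def Dhalf (n : ℕ) (a : List ℕ) : ℚ :=
  ((n : ℚ)^2 - ∑ i ∈ Finset.range n, (conjPart a (i+1) : ℚ)^2) / 2



lemma conjPart_append_singleton (l : List ℕ) (c j : ℕ) :
    conjPart (l ++ [c]) j = conjPart l j + if j ≤ c then 1 else 0 := by
  simp only [conjPart, List.filter_append, List.length_append, List.filter_cons,
    List.filter_nil]
  split <;> simp_all

lemma conjPart_eq_zero (l : List ℕ) (j : ℕ) (hj : l.sum < j) : conjPart l j = 0 := by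
  rw [conjPart, List.length_eq_zero_iff, List.filter_eq_nil_iff]
  intro x hx
  have : x ≤ l.sum := List.single_le_sum (fun y _ => Nat.zero_le y) x hx
  simp only [decide_eq_true_eq]
  omega

lemma sum_lemma (m : ℕ) : ∀ l : List ℕ, (∀ x ∈ l, 2 ≤ x) →
    (l.filter (fun x => m ≤ x)).length + l.length ≤ l.sum := by
  intro l
  induction l with
  | nil => simp
  | cons x t ih =>
    intro h
    have hx := h x (by simp)
    have ht := ih (fun y hy => h y (List.mem_cons_of_mem _ hy))
    simp only [List.filter_cons, List.sum_cons, List.length_cons]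
    split <;> simp <;> omega

theorem stmt5 (n : ℕ) (a : List ℕ) (h : IsPartitionOf n a) (hne : a ≠ [])
    (h2 : ∀ x ∈ a, 2 ≤ x) (h3 : 3 ≤ a.headI) :
    (a.getLastD 0 : ℚ) + a.length - 2
      ≤ Dhalf n a - Dhalf (n - 1) (a.dropLast ++ [a.getLastD 0 - 1]) := by
  obtain ⟨hsort, hpos, hsum⟩ := h
  set m := a.getLastD 0 with hm
  set d := a.dropLast with hd
  have hlast : d ++ [m] = a := by
    rw [hm, List.getLastD_eq_getLast?, List.getLast?_eq_getLast hne]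
    exact List.dropLast_append_getLast hne
  have hmem : m ∈ a := by rw [← hlast]; simp
  have hm2 : 2 ≤ m := h2 m hmem
  have hd2 : ∀ x ∈ d, 2 ≤ x := fun x hx => h2 x (List.dropLast_subset a hx)
  have hdsum : d.sum + m = n := by rw [← hsum, ← hlast]; simp
  have hn2 : 2 ≤ n := by omega
  set cdm := conjPart d m with hcdm
  have hkey := sum_lemma m d hd2
  have hkey' : cdm + d.length + m ≤ n := by
    rw [hcdm]; unfold conjPart; omega
  have hylen : a.length = d.length + 1 := by rw [← hlast]; simp
  have hbsum : (d ++ [m-1]).sum = n - 1 := by simp; omega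
  have hext : ∑ i ∈ Finset.range (n-1), (conjPart (d ++ [m-1]) (i+1) : ℚ)^2
      = ∑ i ∈ Finset.range n, (conjPart (d ++ [m-1]) (i+1) : ℚ)^2 := by
    refine Finset.sum_subset (Finset.range_subset_range.2 (by omega)) ?_
    intro x hx hx'
    simp only [Finset.mem_range] at hx hx'
    have hlt : (d ++ [m-1]).sum < x + 1 := by rw [hbsum]; omega
    rw [conjPart_eq_zero _ _ hlt]
    norm_num
  have hdiff : ∀ i ∈ Finset.range n,
      (conjPart a (i+1) : ℚ)^2 - (conjPart (d ++ [m-1]) (i+1) : ℚ)^2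
      = if i = m - 1 then 2*(cdm:ℚ) + 1 else 0 := by
    intro i _
    rw [← hlast, conjPart_append_singleton, conjPart_append_singleton]
    by_cases hi : i = m - 1
    · subst hi
      have h1 : m - 1 + 1 = m := by omega
      rw [h1, if_pos le_rfl, if_neg (by omega), if_pos rfl]
      push_cast
      ring
    · rw [if_neg hi]
      by_cases h1 : i + 1 ≤ m - 1
      · rw [if_pos h1, if_pos (by omega : i + 1 ≤ m)]
        ring
      · rw [if_neg h1, if_neg (by omega : ¬ (i + 1 ≤ m))]
        ring
  have hsum2 : ∑ i ∈ Finset.range n,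
      ((conjPart a (i+1) : ℚ)^2 - (conjPart (d ++ [m-1]) (i+1) : ℚ)^2)
      = 2*(cdm:ℚ) + 1 := by
    rw [Finset.sum_congr rfl hdiff, Finset.sum_ite_eq' (Finset.range n) (m-1)]
    rw [if_pos (Finset.mem_range.2 (by omega))]
  have hAB : (∑ i ∈ Finset.range n, (conjPart a (i+1):ℚ)^2)
      - ∑ i ∈ Finset.range n, (conjPart (d ++ [m-1]) (i+1):ℚ)^2
      = 2*(cdm:ℚ)+1 := by
    rw [← Finset.sum_sub_distrib]; exact hsum2
  have hD : Dhalf n a - Dhalf (n-1) (d ++ [m-1]) = (n:ℚ) - cdm - 1 := by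
    unfold Dhalf
    rw [hext]
    have hc : ((n - 1 : ℕ) : ℚ) = (n : ℚ) - 1 := by
      rw [Nat.cast_sub (by omega)]; norm_num
    rw [hc]
    linear_combination (-1/2 : ℚ) * hAB
  rw [hD, hylen]
  have hcast : (cdm:ℚ) + d.length + m ≤ n := by exact_mod_cast hkey'
  push_cast
  linarith
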